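/- Let k ≥ 1 be an integer and G a strongly connected digraph with m arcs and maximum outdegree Δ⁺(G) ≤ m − k. If m ≥ 3k and α ∈ [1/2, 1), then λ_α(G) ≤ α(m−k) + (1−α)k/(m−k) + 1 − α. -/

import Mathlib

open Matrix Finset ENNReal

/-- The outdegree of a vertex in a digraph given by its arc relation. -/
def outDeg {V : Type*} [Fintype V] (E : V → V → Prop) [DecidableRel E] (u : V) : ℕ :=
  (Finset.univ.filter (fun v => E u v)).card

/-- The maximum outdegree. -/
def maxOutDeg {V : Type*} [Fintype V] (E : V → V → Prop) [DecidableRel E] : ℕ :=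
  Finset.univ.sup (outDeg E)

/-- A simple digraph has no loops. -/
def IsSimpleDigraph {V : Type*} (E : V → V → Prop) : Prop := ∀ v, ¬ E v v

/-- Strong connectivity: every vertex reaches every other by a directed walk. -/
def StronglyConnected {V : Type*} (E : V → V → Prop) : Prop :=
  ∀ u v, Relation.ReflTransGen E u v

/-- The A_α matrix  α D + (1-α) A  of a digraph, over ℂ. -/
noncomputable def Aalpha {V : Type*} [Fintype V] [DecidableEq V] (α : ℝ)
    (E : V → V → Prop) [DecidableRel E] : Matrix V V ℂ :=
  (α : ℂ) • Matrix.diagonal (fun u => (outDeg E u : ℂ)) +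
    ((1 - α : ℝ) : ℂ) • Matrix.of (fun u v => if E u v then (1 : ℂ) else 0)

/-- The A_α spectral radius of a digraph. -/
noncomputable def lambdaAlpha {V : Type*} [Fintype V] [DecidableEq V] (α : ℝ)
    (E : V → V → Prop) [DecidableRel E] : ℝ≥0∞ :=
  spectralRadius ℂ (Aalpha α E)

/-- The signless Laplacian matrix D + A of a digraph, over ℂ. -/
noncomputable def signlessLaplacian {V : Type*} [Fintype V] [DecidableEq V]
    (E : V → V → Prop) [DecidableRel E] : Matrix V V ℂ :=
  Matrix.diagonal (fun u => (outDeg E u : ℂ)) +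
    Matrix.of (fun u v => if E u v then (1 : ℂ) else 0)

/-- The signless Laplacian spectral radius of a digraph. -/
noncomputable def qSpec {V : Type*} [Fintype V] [DecidableEq V]
    (E : V → V → Prop) [DecidableRel E] : ℝ≥0∞ :=
  spectralRadius ℂ (signlessLaplacian E)

lemma key0 (x k d α S : ℝ) (hk : 1 ≤ k) (hd2k : 2*k ≤ d) (hx1 : 1 ≤ x) (hxd : x ≤ d)
    (hS1 : S ≤ d + k - x) (hS2 : S ≤ x*d)
    (ha : 1/2 ≤ α) (ha1 : α < 1) :
    α*x*x*d + (1-α)*S*d ≤ α*d*d*x + (1-α)*k*x + (1-α)*d*x := by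
  have hx0 : (0:ℝ) < x := by linarith
  have hd0 : (0:ℝ) < d := by linarith
  have ha0 : (0:ℝ) ≤ 1 - α := by linarith
  have ha2 : (0:ℝ) ≤ 2*α - 1 := by linarith
  have hdk : (0:ℝ) < d*d - k := by nlinarith
  have hddk : (0:ℝ) ≤ d*d - d - k := by nlinarith
  have hW : 0 ≤ α*d*(d*d-k) - (1-α)*(d+1)*(d*d-d-k) := by
    nlinarith [mul_nonneg ha2 (by nlinarith : (0:ℝ) ≤ d*(d*d-k) + (d+1)*(d*d-d-k))]
  rcases le_total (x*(d+1)) (d+k) with hc | hc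
  · have h1 : (1-α)*S*d ≤ (1-α)*(x*d)*d :=
      mul_le_mul_of_nonneg_right (mul_le_mul_of_nonneg_left hS2 ha0) hd0.le
    have hA : d*d - k ≤ (d-x)*(d+1) := by nlinarith
    have hC : (1-α)*(d*d-d-k)*(d+1) ≤ α*d*((d-x)*(d+1)) := by
      nlinarith [mul_le_mul_of_nonneg_left hA (mul_nonneg (by linarith : (0:ℝ) ≤ α) hd0.le)]
    have hC' : (1-α)*(d*d-d-k) ≤ α*d*(d-x) := by
      have hd1 : (0:ℝ) < d+1 := by linarith
      nlinarith [hC]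
    nlinarith [mul_nonneg hx0.le (sub_nonneg.2 hC')]
  · have h1 : (1-α)*S*d ≤ (1-α)*(d+k-x)*d :=
      mul_le_mul_of_nonneg_right (mul_le_mul_of_nonneg_left hS1 ha0) hd0.le
    have hu : (0:ℝ) ≤ x*(d+1)-(d+k) := by linarith
    have hv : (0:ℝ) ≤ d - x := by linarith
    set Q : ℝ := α*d*d*x + (1-α)*k*x + (1-α)*d*x - α*x*x*d - (1-α)*(d+k-x)*d with hQdef
    have hident : Q*((d*d-k)*(d+1)) =
        (d-x)*(d+k)*(α*d*(d*d-k) - (1-α)*(d+1)*(d*d-d-k))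
        + (1-α)*d*d*(d+1)*(x*(d+1)-(d+k))
        + α*d*(x*(d+1)-(d+k))*(d-x)*(d*d-k) := by ring
    have hQnn : 0 ≤ Q := by
      have hpos : (0:ℝ) < (d*d-k)*(d+1) := by nlinarith
      have hr : 0 ≤ Q*((d*d-k)*(d+1)) := by
        rw [hident]
        have t1 : 0 ≤ (d-x)*(d+k)*(α*d*(d*d-k) - (1-α)*(d+1)*(d*d-d-k)) :=
          mul_nonneg (mul_nonneg hv (by linarith)) hW
        have t2 : 0 ≤ (1-α)*d*d*(d+1)*(x*(d+1)-(d+k)) := by positivity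
        have t3 : 0 ≤ α*d*(x*(d+1)-(d+k))*(d-x)*(d*d-k) := by
          have : (0:ℝ) ≤ α := by linarith
          positivity
        linarith
      exact nonneg_of_mul_nonneg_right (by linarith [hr] : 0 ≤ (d*d-k)*(d+1)*Q) hpos
    linarith [hQnn]

lemma key1 (x k m α S : ℝ) (hk : 1 ≤ k) (hm : 3*k ≤ m) (hx1 : 1 ≤ x) (hxd : x ≤ m-k)
    (hS1 : S ≤ m - x) (hS2 : S ≤ x*(m-k))
    (ha : 1/2 ≤ α) (ha1 : α < 1) :
    α*x + (1-α)*S/x ≤ α*(m-k) + (1-α)*k/(m-k) + 1 - α := by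
  have hx0 : (0:ℝ) < x := by linarith
  have hd0 : (0:ℝ) < m - k := by linarith
  have H := key0 x k (m-k) α S hk (by linarith) hx1 hxd (by linarith) hS2 ha ha1
  have hxd0 : (0:ℝ) < x*(m-k) := mul_pos hx0 hd0
  calc α*x + (1-α)*S/x = (α*x*x*(m-k) + (1-α)*S*(m-k))/(x*(m-k)) := by
        field_simp
    _ ≤ (α*(m-k)*(m-k)*x + (1-α)*k*x + (1-α)*(m-k)*x)/(x*(m-k)) :=
        div_le_div_of_nonneg_right H hxd0.le
    _ = α*(m-k) + (1-α)*k/(m-k) + 1 - α := by field_simp; ring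

lemma eigvec {V : Type*} [Fintype V] [DecidableEq V] (M : Matrix V V ℂ) (μ : ℂ)
    (h : μ ∈ spectrum ℂ M) : ∃ z : V → ℂ, z ≠ 0 ∧ M.mulVec z = μ • z := by
  rw [spectrum.mem_iff] at h
  have hdet : (algebraMap ℂ (Matrix V V ℂ) μ - M).det = 0 := by
    by_contra hne
    exact h ((Matrix.isUnit_iff_isUnit_det _).mpr (isUnit_iff_ne_zero.mpr hne))
  obtain ⟨z, hz, hmz⟩ := (Matrix.exists_mulVec_eq_zero_iff).mpr hdet
  refine ⟨z, hz, ?_⟩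
  have h0 : (algebraMap ℂ (Matrix V V ℂ) μ).mulVec z - M.mulVec z = 0 := by
    rw [← Matrix.sub_mulVec]; exact hmz
  have h2 : (algebraMap ℂ (Matrix V V ℂ) μ).mulVec z = μ • z := by
    rw [Matrix.algebraMap_eq_diagonal]
    ext i
    simp [Matrix.mulVec_diagonal, Pi.algebraMap_apply, Algebra.algebraMap_self_apply]
  rw [h2] at h0
  ext i; have := congrFun h0 i
  simp only [Pi.sub_apply, Pi.zero_apply, sub_eq_zero] at this
  simpa using this.symm

theorem stmt_2 {V : Type*} [Fintype V] [DecidableEq V]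
    (E : V → V → Prop) [DecidableRel E]
    (hsimple : IsSimpleDigraph E) (hsc : StronglyConnected E)
    (k m : ℕ) (hk : 1 ≤ k) (hm : m = ∑ v, outDeg E v)
    (hΔ : maxOutDeg E ≤ m - k) (hmk : 3 * k ≤ m)
    (α : ℝ) (hα : 1/2 ≤ α) (hα1 : α < 1) :
    lambdaAlpha α E ≤
      ENNReal.ofReal
        (α * ((m : ℝ) - k) + (1 - α) * k / ((m : ℝ) - k) + 1 - α) := by
  have hm3 : 3 ≤ m := le_trans (by omega) hmk
  have hkm : k ≤ m := by omega
  -- some arc exists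
  have harc : ∃ w v, E w v := by
    by_contra h; push_neg at h
    have h0 : ∀ v, outDeg E v = 0 := by
      intro v
      simp only [outDeg, Finset.card_eq_zero, Finset.filter_eq_empty_iff]
      exact fun w _ => h v w
    rw [hm] at hm3; simp [h0] at hm3
  obtain ⟨w0, v0, hwv⟩ := harc
  have hNE : Nonempty V := ⟨w0⟩
  have hw0v0 : w0 ≠ v0 := fun h => hsimple w0 (by rwa [← h] at hwv)
  -- every vertex has outdegree ≥ 1
  have hdeg1 : ∀ u, 1 ≤ outDeg E u := by
    intro u
    obtain ⟨t, ht⟩ : ∃ t, t ≠ u := by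
      rcases eq_or_ne u w0 with rfl | hne
      · exact ⟨v0, fun h => hw0v0 h.symm⟩
      · exact ⟨w0, hne.symm⟩
    rcases (hsc u t).cases_head with h | ⟨c, hc, -⟩
    · exact absurd h.symm ht
    · exact Nat.one_le_iff_ne_zero.mpr (Finset.card_ne_zero_of_mem
        (Finset.mem_filter.mpr ⟨Finset.mem_univ c, hc⟩))
  have hΔ' : ∀ u, outDeg E u ≤ m - k := fun u =>
    le_trans (Finset.le_sup (Finset.mem_univ u)) hΔ
  -- unfold spectral radius
  rw [lambdaAlpha, spectralRadius]
  refine iSup₂_le fun μ hμ => ?_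
  obtain ⟨z, hz, hMz⟩ := eigvec _ μ hμ
  -- choose maximizing vertex
  obtain ⟨u, -, hu⟩ := Finset.exists_max_image Finset.univ
    (fun v => ‖z v‖ / (outDeg E v : ℝ)) (Finset.univ_nonempty)
  have hdu : (0:ℝ) < (outDeg E u : ℝ) := by exact_mod_cast hdeg1 u
  have hfu : 0 < ‖z u‖ := by
    obtain ⟨v1, hv1⟩ := Function.ne_iff.mp hz
    have hd1 : (0:ℝ) < (outDeg E v1 : ℝ) := by exact_mod_cast hdeg1 v1
    have h1 : 0 < ‖z v1‖ / (outDeg E v1 : ℝ) :=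
      div_pos (norm_pos_iff.mpr (by simpa using hv1)) hd1
    have h2 := hu v1 (Finset.mem_univ v1)
    have h3 : 0 < ‖z u‖ / (outDeg E u : ℝ) := lt_of_lt_of_le h1 h2
    by_contra hcon
    push_neg at hcon
    have : ‖z u‖ = 0 := le_antisymm hcon (norm_nonneg _)
    rw [this, zero_div] at h3; exact lt_irrefl 0 h3
  set N : Finset V := Finset.univ.filter (fun v => E u v) with hN
  -- the eigen-equation at row u
  have hAent : ∀ v, Aalpha α E u v =
      (α:ℂ) * (if u = v then ((outDeg E u : ℕ):ℂ) else 0) +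
      ((1-α : ℝ):ℂ) * (if E u v then (1:ℂ) else 0) := by
    intro v
    rcases eq_or_ne u v with rfl | hne
    · simp [Aalpha, Matrix.diagonal_apply_eq]
    · simp [Aalpha, Matrix.diagonal_apply_ne _ hne, if_neg hne]
  have hsum : (Aalpha α E).mulVec z u =
      (α:ℂ)*((outDeg E u : ℕ):ℂ)*z u + ((1-α:ℝ):ℂ) * ∑ v ∈ N, z v := by
    simp only [Matrix.mulVec, dotProduct]
    rw [Finset.sum_congr rfl (fun v _ => by rw [hAent v])]
    have e1 : ∀ v : V, ((α:ℂ) * (if u = v then ((outDeg E u : ℕ):ℂ) else 0) +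
        ((1-α : ℝ):ℂ) * (if E u v then (1:ℂ) else 0)) * z v =
        (if u = v then (α:ℂ)*((outDeg E u : ℕ):ℂ)*z v else 0) +
        ((1-α : ℝ):ℂ) * (if E u v then z v else 0) := by
      intro v; split_ifs <;> ring
    rw [Finset.sum_congr rfl (fun v _ => e1 v), Finset.sum_add_distrib,
      Finset.sum_ite_eq Finset.univ u, ← Finset.mul_sum, ← Finset.sum_filter]
    simp [hN]
  have hkey : (μ - (α:ℂ)*((outDeg E u : ℕ):ℂ)) * z u = ((1-α:ℝ):ℂ) * ∑ v ∈ N, z v := by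
    have := congrFun hMz u
    rw [hsum] at this
    have h9 : μ * z u = (α:ℂ)*((outDeg E u : ℕ):ℂ)*z u + ((1-α:ℝ):ℂ) * ∑ v ∈ N, z v := by
      simpa using this.symm
    linear_combination h9
  have ha0 : (0:ℝ) ≤ 1 - α := by linarith
  have h5 : ‖μ - (α:ℂ)*((outDeg E u : ℕ):ℂ)‖ * ‖z u‖ ≤ (1-α) * ∑ v ∈ N, ‖z v‖ := by
    rw [← norm_mul, hkey, norm_mul]
    have : ‖((1-α:ℝ):ℂ)‖ = 1 - α := by
      rw [Complex.norm_real, Real.norm_eq_abs, abs_of_nonneg ha0]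
    rw [this]
    exact mul_le_mul_of_nonneg_left (norm_sum_le _ _) ha0
  have h6 : ∀ v, ‖z v‖ ≤ ((outDeg E v : ℕ):ℝ) * (‖z u‖ / ((outDeg E u : ℕ):ℝ)) := by
    intro v
    have hdv : (0:ℝ) < ((outDeg E v:ℕ):ℝ) := by exact_mod_cast hdeg1 v
    have := hu v (Finset.mem_univ v)
    calc ‖z v‖ = (‖z v‖ / ((outDeg E v:ℕ):ℝ)) * ((outDeg E v:ℕ):ℝ) := by
          field_simp
      _ ≤ (‖z u‖ / ((outDeg E u:ℕ):ℝ)) * ((outDeg E v:ℕ):ℝ) :=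
          mul_le_mul_of_nonneg_right this hdv.le
      _ = ((outDeg E v:ℕ):ℝ) * (‖z u‖ / ((outDeg E u:ℕ):ℝ)) := by ring
  set Sn : ℕ := ∑ v ∈ N, outDeg E v with hSn
  have h7 : ∑ v ∈ N, ‖z v‖ ≤ (Sn:ℝ) * (‖z u‖ / ((outDeg E u:ℕ):ℝ)) := by
    calc ∑ v ∈ N, ‖z v‖ ≤ ∑ v ∈ N, ((outDeg E v:ℕ):ℝ) * (‖z u‖ / ((outDeg E u:ℕ):ℝ)) :=
          Finset.sum_le_sum (fun v _ => h6 v)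
      _ = (Sn:ℝ) * (‖z u‖ / ((outDeg E u:ℕ):ℝ)) := by
          rw [← Finset.sum_mul, hSn]; push_cast; ring
  have h8 : ‖μ - (α:ℂ)*((outDeg E u : ℕ):ℝ)‖ ≤ (1-α) * (Sn:ℝ) / ((outDeg E u:ℕ):ℝ) := by
    have hne : ((1-α) * (Sn:ℝ) / ((outDeg E u:ℕ):ℝ)) * ‖z u‖ =
        (1-α) * ((Sn:ℝ) * (‖z u‖ / ((outDeg E u:ℕ):ℝ))) := by
      field_simp
    have h10 : ‖μ - (α:ℂ)*((outDeg E u : ℕ):ℂ)‖ * ‖z u‖ ≤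
        ((1-α) * (Sn:ℝ) / ((outDeg E u:ℕ):ℝ)) * ‖z u‖ := by
      rw [hne]
      exact le_trans h5 (mul_le_mul_of_nonneg_left h7 ha0)
    exact le_of_mul_le_mul_right h10 hfu
  have hnormmu : ‖μ‖ ≤ α * ((outDeg E u:ℕ):ℝ) + (1-α) * (Sn:ℝ) / ((outDeg E u:ℕ):ℝ) := by
    have ht : ‖μ‖ ≤ ‖(α:ℂ)*((outDeg E u : ℕ):ℂ)‖ + ‖μ - (α:ℂ)*((outDeg E u : ℕ):ℂ)‖ := by
      calc ‖μ‖ = ‖(α:ℂ)*((outDeg E u : ℕ):ℂ) + (μ - (α:ℂ)*((outDeg E u : ℕ):ℂ))‖ := by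
            ring_nf
        _ ≤ _ := norm_add_le _ _
    have hna : ‖(α:ℂ)*((outDeg E u : ℕ):ℂ)‖ = α * ((outDeg E u:ℕ):ℝ) := by
      rw [norm_mul]
      simp [Complex.norm_real, abs_of_nonneg (by linarith : (0:ℝ) ≤ α),
        Complex.norm_natCast]
    calc ‖μ‖ ≤ ‖(α:ℂ)*((outDeg E u : ℕ):ℂ)‖ + ‖μ - (α:ℂ)*((outDeg E u : ℕ):ℂ)‖ := ht
      _ ≤ α * ((outDeg E u:ℕ):ℝ) + (1-α) * (Sn:ℝ) / ((outDeg E u:ℕ):ℝ) := by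
          rw [hna]
          exact add_le_add_right (by exact_mod_cast h8) _
  -- nat bounds on Sn
  have hunotN : u ∉ N := by simp [hN, hsimple u]
  have hSn1 : Sn + outDeg E u ≤ m := by
    have hsub : N ⊆ Finset.univ.erase u := by
      intro v hv
      exact Finset.mem_erase.mpr ⟨fun h => hunotN (h ▸ hv), Finset.mem_univ v⟩
    have h1 : Sn ≤ ∑ v ∈ Finset.univ.erase u, outDeg E v :=
      Finset.sum_le_sum_of_subset hsub
    have h2 : ∑ v ∈ Finset.univ.erase u, outDeg E v + outDeg E u = m := by
      rw [hm]; exact Finset.sum_erase_add _ _ (Finset.mem_univ u)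
    omega
  have hSn2 : Sn ≤ outDeg E u * (m - k) := by
    calc Sn ≤ N.card • (m - k) :=
          Finset.sum_le_card_nsmul N _ (m-k) (fun v _ => hΔ' v)
      _ = outDeg E u * (m - k) := by rw [smul_eq_mul]; rfl
  -- assemble via key1
  have hcast : ((m - k : ℕ):ℝ) = (m:ℝ) - k := by
    push_cast [Nat.cast_sub hkm]; ring
  have hfinal := key1 ((outDeg E u:ℕ):ℝ) k m α (Sn:ℝ)
    (by exact_mod_cast hk) (by exact_mod_cast hmk)
    (by exact_mod_cast hdeg1 u)
    (by rw [← hcast]; exact_mod_cast hΔ' u)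
    (by have := hSn1; push_cast; linarith [(by exact_mod_cast hSn1 : (Sn:ℝ) + ((outDeg E u:ℕ):ℝ) ≤ (m:ℝ))])
    (by rw [← hcast]; exact_mod_cast hSn2)
    hα hα1
  have hnorm : ‖μ‖ ≤ α * ((m:ℝ) - k) + (1-α)*k/((m:ℝ)-k) + 1 - α :=
    le_trans hnormmu hfinal
  calc (‖μ‖₊ : ℝ≥0∞) = ENNReal.ofReal ‖μ‖ := (ofReal_norm μ).symm
    _ ≤ _ := ENNReal.ofReal_le_ofReal hnorm
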